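/- For any one-pair Rabin automaton R, the relation {(t,t') ∈ Σ^ω × Σ^ω | val(run of R on t) > val(run of R on t')} is ω-regular (recognizable by an ω-automaton reading the merge of t and t'). -/

import Mathlib

open scoped Classical

/-- The run of a deterministic automaton from `q0` on an infinite word. -/
def runOn {Q σ : Type*} (δ : Q → σ → Q) (q0 : Q) (w : ℕ → σ) : ℕ → Q
  | 0 => q0
  | n + 1 => δ (runOn δ q0 w n) (w n)

/-- `firstF(κ)`: position of the first visit of the run `κ` to `F`
(`∞` if `κ` never visits `F`). -/
noncomputable def firstF {Q : Type*} (F : Set Q) (κ : ℕ → Q) : ℕ∞ :=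
  sInf ((fun n : ℕ => (n : ℕ∞)) '' {n | κ n ∈ F})

/-- `lastB(κ)`: position of the last visit of the run `κ` to `B`
(`⊥` if there is none, `∞` if there are infinitely many). -/
noncomputable def lastB {Q : Type*} (B : Set Q) (κ : ℕ → Q) : WithBot ℕ∞ :=
  sSup ((fun n : ℕ => ((n : ℕ∞) : WithBot ℕ∞)) '' {n | κ n ∈ B})

/-- `val(κ) = firstF(κ)` if `lastB(κ) = ⊥`, and `max{lastB(κ), firstF(κ)}`
otherwise; in particular `val(κ) = ∞` if `κ` visits `B` infinitely often or
never visits `F`. -/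
noncomputable def runVal {Q : Type*} (B F : Set Q) (κ : ℕ → Q) : WithBot ℕ∞ :=
  if {n | κ n ∈ B} = ∅ then (firstF F κ : WithBot ℕ∞)
  else max (lastB B κ) ((firstF F κ : WithBot ℕ∞))

section ValLemmas
variable {Q : Type*} (B F : Set Q) (κ : ℕ → Q)

lemma firstF_le (N : ℕ) : firstF F κ ≤ (N : ℕ∞) ↔ ∃ m ≤ N, κ m ∈ F := by
  constructor
  · intro h
    by_contra hc
    push_neg at hc
    have : (N : ℕ∞) + 1 ≤ firstF F κ := by
      apply le_sInf
      rintro x ⟨m, hm, rfl⟩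
      have : N + 1 ≤ m := by
        by_contra h2; exact hc m (by omega) hm
      exact_mod_cast Nat.cast_le.mpr this
    have h2 := le_trans this h
    exact absurd h2 (by exact_mod_cast Nat.not_succ_le_self N)
  · rintro ⟨m, hm, hmem⟩
    have h1 : firstF F κ ≤ (m : ℕ∞) := sInf_le ⟨m, hmem, rfl⟩
    exact le_trans h1 (by exact_mod_cast hm)

lemma lastB_le (N : ℕ) : lastB B κ ≤ ((N : ℕ∞) : WithBot ℕ∞) ↔ ∀ m, κ m ∈ B → m ≤ N := by
  constructor
  · intro h m hm
    have hmem2 : ((m : ℕ∞) : WithBot ℕ∞) ∈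
        (fun n : ℕ => ((n : ℕ∞) : WithBot ℕ∞)) '' {n | κ n ∈ B} := ⟨m, hm, rfl⟩
    have h1 : ((m : ℕ∞) : WithBot ℕ∞) ≤ ((N : ℕ∞) : WithBot ℕ∞) :=
      le_trans (le_sSup hmem2) h
    exact_mod_cast h1
  · intro h
    apply sSup_le
    rintro x ⟨m, hm, rfl⟩
    show ((m : ℕ∞) : WithBot ℕ∞) ≤ _
    exact_mod_cast h m hm

lemma runVal_le (N : ℕ) : runVal B F κ ≤ ((N : ℕ∞) : WithBot ℕ∞) ↔
    (∃ m ≤ N, κ m ∈ F) ∧ ∀ m, κ m ∈ B → m ≤ N := by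
  unfold runVal
  split_ifs with h
  · have hB : ∀ m, κ m ∈ B → m ≤ N := by
      intro m hm; exact absurd (Set.eq_empty_iff_forall_notMem.mp h m) (by simp [hm])
    rw [WithBot.coe_le_coe, firstF_le]
    tauto
  · rw [max_le_iff, WithBot.coe_le_coe, firstF_le, lastB_le]
    tauto

lemma runVal_ne_bot : runVal B F κ ≠ ⊥ := by
  unfold runVal
  split_ifs with h
  · exact WithBot.coe_ne_bot
  · intro hc
    rw [max_eq_bot] at hc
    exact WithBot.coe_ne_bot hc.2

lemma runVal_key (κ' : ℕ → Q) : runVal B F κ' < runVal B F κ ↔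
    ∃ N : ℕ, (∃ m ≤ N, κ' m ∈ F) ∧ (∀ m > N, κ' m ∉ B) ∧
      ((∀ m ≤ N, κ m ∉ F) ∨ ∃ m > N, κ m ∈ B) := by
  have hgt : ∀ N : ℕ, (((N : ℕ∞) : WithBot ℕ∞) < runVal B F κ ↔
      (∀ m ≤ N, κ m ∉ F) ∨ ∃ m > N, κ m ∈ B) := by
    intro N
    rw [lt_iff_not_ge, runVal_le]
    push_neg
    constructor
    · intro h
      by_cases hF : ∃ m ≤ N, κ m ∈ F
      · obtain ⟨m, hm1, hm2⟩ := h hF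
        refine Or.inr ⟨m, ?_, ?_⟩ <;> first | assumption | omega
      · push_neg at hF; exact Or.inl hF
    · rintro (h | ⟨m, hm1, hm2⟩)
      · intro ⟨m, hm1, hm2⟩; exact absurd hm2 (h m hm1)
      · intro _; refine ⟨m, ?_, ?_⟩ <;> first | assumption | omega

  constructor
  · intro h
    have hne := runVal_ne_bot B F κ'
    obtain ⟨v, hv⟩ := WithBot.ne_bot_iff_exists.mp hne
    have hvlt : (v : WithBot ℕ∞) < runVal B F κ := hv ▸ h
    have hvne : v ≠ ⊤ := by
      rintro rfl
      exact absurd hvlt (by simp)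
    obtain ⟨N, rfl⟩ := WithTop.ne_top_iff_exists.mp hvne
    have hle : runVal B F κ' ≤ ((N : ℕ∞) : WithBot ℕ∞) := le_of_eq hv.symm
    rw [runVal_le] at hle
    refine ⟨N, hle.1, fun m hm hmem => absurd (hle.2 m hmem) (by omega), (hgt N).mp hvlt⟩
  · rintro ⟨N, h1, h2, h3⟩
    have hle : runVal B F κ' ≤ ((N : ℕ∞) : WithBot ℕ∞) :=
      (runVal_le B F κ' N).mpr ⟨h1, fun m hm => by by_contra h; exact h2 m (by omega) hm⟩
    exact lt_of_le_of_lt hle ((hgt N).mpr h3)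

end ValLemmas

inductive RPhase : Type where
  | p1 (f f' : Bool) : RPhase
  | p2 : RPhase
  | p3 : RPhase
  deriving DecidableEq, Fintype

section Aut
variable {Q σ : Type*} (δ : Q → σ → Q) (B F : Set Q) (q0 : Q)

/-- phase transition relation; `q`, `q'` are the *target* automaton states. -/
def stepPh (q q' : Q) : RPhase → RPhase → Prop
  | .p1 f f', .p1 g g' =>
      (g = true ↔ (f = true ∨ q ∈ F)) ∧ (g' = true ↔ (f' = true ∨ q' ∈ F))
  | .p1 _ f', .p2 => f' = true ∧ q' ∉ B
  | .p1 f f', .p3 => f' = true ∧ q' ∉ B ∧ (f = false ∨ q ∈ B)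
  | .p2, .p2 => q' ∉ B ∧ q ∉ B
  | .p2, .p3 => q' ∉ B ∧ q ∈ B
  | .p3, .p3 => q' ∉ B
  | _, _ => False

def Δ₀ (s : Q × Q × RPhase) (a : σ × σ) : Set (Q × Q × RPhase) :=
  {t | t.1 = δ s.1 a.1 ∧ t.2.1 = δ s.2.1 a.2 ∧ stepPh B F t.1 t.2.1 s.2.2 t.2.2}

def init₀ : Set (Q × Q × RPhase) :=
  {(q0, q0, RPhase.p1 (decide (q0 ∈ F)) (decide (q0 ∈ F)))}

def acc₀ : Set (Q × Q × RPhase) := {s | s.2.2 = RPhase.p3}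

end Aut

lemma exists_le_succ_iff {P : ℕ → Prop} (n : ℕ) :
    (∃ m ≤ n + 1, P m) ↔ (∃ m ≤ n, P m) ∨ P (n + 1) := by
  constructor
  · rintro ⟨m, hm, h⟩
    rcases eq_or_lt_of_le hm with rfl | h2
    · exact Or.inr h
    · exact Or.inl ⟨m, by omega, h⟩
  · rintro (⟨m, hm, h⟩ | h)
    · exact ⟨m, by omega, h⟩
    · exact ⟨n + 1, le_refl _, h⟩

theorem main_correct {Q σ : Type*} (δ : Q → σ → Q) (q0 : Q) (B F : Set Q)
    (w : ℕ → σ × σ) :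
    (∃ N : ℕ, (∃ m ≤ N, runOn δ q0 (fun n => (w n).2) m ∈ F) ∧
        (∀ m > N, runOn δ q0 (fun n => (w n).2) m ∉ B) ∧
        ((∀ m ≤ N, runOn δ q0 (fun n => (w n).1) m ∉ F) ∨
          ∃ m > N, runOn δ q0 (fun n => (w n).1) m ∈ B)) ↔
      ∃ ρ : ℕ → Q × Q × RPhase, ρ 0 ∈ init₀ F q0 ∧
        (∀ n, ρ (n + 1) ∈ Δ₀ δ B F (ρ n) (w n)) ∧
        {n | ρ n ∈ acc₀}.Infinite := by
  set κ := runOn δ q0 (fun n => (w n).1) with hκ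
  set κ' := runOn δ q0 (fun n => (w n).2) with hκ'
  have hκ0 : κ 0 = q0 := rfl
  have hκ'0 : κ' 0 = q0 := rfl
  have hκs : ∀ n, κ (n + 1) = δ (κ n) (w n).1 := fun n => rfl
  have hκ's : ∀ n, κ' (n + 1) = δ (κ' n) (w n).2 := fun n => rfl
  constructor
  · rintro ⟨N, h1, h2, h3⟩
    classical
    set fl : ℕ → Bool := fun m => decide (∃ k ≤ m, κ k ∈ F) with hfl
    set fl' : ℕ → Bool := fun m => decide (∃ k ≤ m, κ' k ∈ F) with hfl'
    set P : ℕ → Prop := fun m =>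
      (∀ k ≤ N, κ k ∉ F) ∨ ∃ k, N < k ∧ k ≤ m ∧ κ k ∈ B with hP
    set ph : ℕ → RPhase := fun m =>
      if m ≤ N then RPhase.p1 (fl m) (fl' m)
      else if P m then RPhase.p3 else RPhase.p2 with hph
    have phEq : ∀ m, ph m = if m ≤ N then RPhase.p1 (fl m) (fl' m)
        else if P m then RPhase.p3 else RPhase.p2 := fun m => rfl
    refine ⟨fun m => (κ m, κ' m, ph m), ?_, ?_, ?_⟩
    · show (κ 0, κ' 0, ph 0) ∈ init₀ F q0
      have h0 : ph 0 = RPhase.p1 (decide (q0 ∈ F)) (decide (q0 ∈ F)) := by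
        have e1 : fl 0 = decide (q0 ∈ F) := by
          apply decide_eq_decide.mpr
          constructor
          · rintro ⟨k, hk, h⟩; interval_cases k; exact h
          · intro h; exact ⟨0, le_refl _, h⟩
        have e2 : fl' 0 = decide (q0 ∈ F) := by
          apply decide_eq_decide.mpr
          constructor
          · rintro ⟨k, hk, h⟩; interval_cases k; exact h
          · intro h; exact ⟨0, le_refl _, h⟩
        rw [phEq 0, if_pos (Nat.zero_le N), e1, e2]
      rw [h0, hκ0, hκ'0]
      rfl
    · intro n
      show κ (n+1) = δ (κ n) (w n).1 ∧ κ' (n+1) = δ (κ' n) (w n).2 ∧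
        stepPh B F (κ (n+1)) (κ' (n+1)) (ph n) (ph (n+1))
      refine ⟨hκs n, hκ's n, ?_⟩
      rcases lt_trichotomy n N with hn | hn | hn
      · -- both in phase 1
        have e1 : ph n = RPhase.p1 (fl n) (fl' n) := by
          rw [phEq n, if_pos (by omega)]
        have e2 : ph (n+1) = RPhase.p1 (fl (n+1)) (fl' (n+1)) := by
          rw [phEq (n+1), if_pos (by omega)]
        rw [e1, e2]
        constructor
        · simp only [hfl, decide_eq_true_eq]
          rw [exists_le_succ_iff]
        · simp only [hfl', decide_eq_true_eq]
          rw [exists_le_succ_iff]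
      · -- switch step, n = N
        subst hn
        have e1 : ph n = RPhase.p1 (fl n) (fl' n) := by
          rw [phEq n, if_pos (le_refl n)]
        have hf' : fl' n = true := by simp only [hfl', decide_eq_true_eq]; exact h1
        have hB' : κ' (n+1) ∉ B := h2 _ (by omega)
        by_cases hPN : P (n + 1)
        · have e2 : ph (n+1) = RPhase.p3 := by
            rw [phEq (n+1), if_neg (by omega), if_pos hPN]
          rw [e1, e2]
          refine ⟨hf', hB', ?_⟩
          rcases hPN with hL | ⟨k, hk1, hk2, hk3⟩
          · left
            simp only [hfl, decide_eq_false_iff_not]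
            intro hc
            obtain ⟨k, hk, hkF⟩ := hc
            exact hL k hk hkF
          · right
            have : k = n + 1 := by omega
            rwa [this] at hk3
        · have e2 : ph (n+1) = RPhase.p2 := by
            rw [phEq (n+1), if_neg (by omega), if_neg hPN]
          rw [e1, e2]
          exact ⟨hf', hB'⟩
      · -- after the switch
        have hB' : κ' (n+1) ∉ B := h2 _ (by omega)
        by_cases hPn : P n
        · have e1 : ph n = RPhase.p3 := by
            rw [phEq n, if_neg (by omega), if_pos hPn]
          have hPn1 : P (n+1) := by
            rcases hPn with hL | ⟨k, hk1, hk2, hk3⟩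
            · exact Or.inl hL
            · exact Or.inr ⟨k, hk1, by omega, hk3⟩
          have e2 : ph (n+1) = RPhase.p3 := by
            rw [phEq (n+1), if_neg (by omega), if_pos hPn1]
          rw [e1, e2]
          exact hB'
        · have e1 : ph n = RPhase.p2 := by
            rw [phEq n, if_neg (by omega), if_neg hPn]
          by_cases hPn1 : P (n+1)
          · have e2 : ph (n+1) = RPhase.p3 := by
              rw [phEq (n+1), if_neg (by omega), if_pos hPn1]
            rw [e1, e2]
            refine ⟨hB', ?_⟩
            rcases hPn1 with hL | ⟨k, hk1, hk2, hk3⟩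
            · exact absurd (Or.inl hL) hPn
            · have : k = n + 1 := by
                by_contra hc
                exact hPn (Or.inr ⟨k, hk1, by omega, hk3⟩)
              rwa [this] at hk3
          · have e2 : ph (n+1) = RPhase.p2 := by
              rw [phEq (n+1), if_neg (by omega), if_neg hPn1]
            rw [e1, e2]
            refine ⟨hB', ?_⟩
            intro hc
            exact hPn1 (Or.inr ⟨n+1, by omega, le_refl _, hc⟩)
    · -- acceptance
      have hM : ∃ M, ∀ m > M, ph m = RPhase.p3 := by
        rcases h3 with hL | ⟨m0, hm0, hm0B⟩
        · refine ⟨N, fun m hm => ?_⟩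
          have hPm : P m := Or.inl hL
          rw [phEq m, if_neg (by omega), if_pos hPm]
        · refine ⟨N + m0, fun m hm => ?_⟩
          have hPm : P m := Or.inr ⟨m0, hm0, by omega, hm0B⟩
          rw [phEq m, if_neg (by omega), if_pos hPm]
      obtain ⟨M, hM⟩ := hM
      have hsub : Set.Ioi M ⊆ {n | (fun m => (κ m, κ' m, ph m)) n ∈ acc₀} := by
        intro m hm
        show ph m = RPhase.p3
        exact hM m hm
      exact Set.Infinite.mono hsub (Set.Ioi_infinite M)
  · rintro ⟨ρ, hinit, hstep, hacc⟩
    have hinit' : ρ 0 = (q0, q0, RPhase.p1 (decide (q0 ∈ F)) (decide (q0 ∈ F))) := hinit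
    have hfst : ∀ n, (ρ n).1 = κ n := by
      intro n
      induction n with
      | zero => rw [hinit', hκ0]
      | succ n ih => rw [(hstep n).1, ih, hκs n]
    have hsnd : ∀ n, (ρ n).2.1 = κ' n := by
      intro n
      induction n with
      | zero => rw [hinit', hκ'0]
      | succ n ih => rw [(hstep n).2.1, ih, hκ's n]
    set φ : ℕ → RPhase := fun n => (ρ n).2.2 with hφ
    have hst : ∀ n, stepPh B F (κ (n+1)) (κ' (n+1)) (φ n) (φ (n+1)) := by
      intro n
      have := (hstep n).2.2
      rwa [hfst, hsnd] at this
    have hφ0 : φ 0 = RPhase.p1 (decide (q0 ∈ F)) (decide (q0 ∈ F)) := by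
      show (ρ 0).2.2 = _
      rw [hinit']
    -- flag invariant
    have hflag : ∀ n f f', φ n = RPhase.p1 f f' →
        (f' = true → ∃ m ≤ n, κ' m ∈ F) ∧ (f = false → ∀ m ≤ n, κ m ∉ F) := by
      intro n
      induction n with
      | zero =>
        intro f f' hp
        have hp2 := hφ0.symm.trans hp
        injection hp2 with e1 e2
        subst e1; subst e2
        constructor
        · intro h
          exact ⟨0, le_refl _, by rw [hκ'0]; exact of_decide_eq_true h⟩
        · intro h m hm
          interval_cases m
          rw [hκ0]
          exact of_decide_eq_false h
      | succ n ih =>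
        intro f f' hp
        have hs := hst n
        rw [hp] at hs
        cases hc : φ n with
        | p1 g g' =>
          rw [hc] at hs
          simp only [stepPh] at hs
          obtain ⟨hgf, hgf'⟩ := hs
          obtain ⟨ih1, ih2⟩ := ih g g' hc
          constructor
          · intro hf'
            rcases hgf'.mp hf' with hg' | hF'
            · obtain ⟨m, hm, hmF⟩ := ih1 hg'
              exact ⟨m, by omega, hmF⟩
            · exact ⟨n+1, le_refl _, hF'⟩
          · intro hf m hm
            have hg : g = false := by
              cases hg : g
              · rfl
              · exact absurd (hgf.mpr (Or.inl hg)) (by simp [hf])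
            have hnF : κ (n+1) ∉ F := by
              intro hc2
              exact absurd (hgf.mpr (Or.inr hc2)) (by simp [hf])
            rcases eq_or_lt_of_le hm with rfl | hm2
            · exact hnF
            · exact ih2 hg m (by omega)
        | p2 => rw [hc] at hs; simp only [stepPh] at hs
        | p3 => rw [hc] at hs; simp only [stepPh] at hs
    -- phase-3 persistence
    have hp3succ : ∀ n, φ n = RPhase.p3 → φ (n+1) = RPhase.p3 ∧ κ' (n+1) ∉ B := by
      intro n hp
      have hs := hst n
      rw [hp] at hs
      cases hc : φ (n+1) with
      | p1 g g' => rw [hc] at hs; simp only [stepPh] at hs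
      | p2 => rw [hc] at hs; simp only [stepPh] at hs
      | p3 => rw [hc] at hs; exact ⟨rfl, hs⟩
    have hp2succ : ∀ n, φ n = RPhase.p2 →
        (φ (n+1) = RPhase.p2 ∨ φ (n+1) = RPhase.p3) ∧ κ' (n+1) ∉ B ∧
          (φ (n+1) = RPhase.p3 → κ (n+1) ∈ B) := by
      intro n hp
      have hs := hst n
      rw [hp] at hs
      cases hc : φ (n+1) with
      | p1 g g' => rw [hc] at hs; simp only [stepPh] at hs
      | p2 =>
        rw [hc] at hs
        exact ⟨Or.inl rfl, hs.1, fun h => nomatch h⟩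
      | p3 =>
        rw [hc] at hs
        exact ⟨Or.inr rfl, hs.1, fun _ => hs.2⟩
    -- a position in phase 3 exists
    obtain ⟨n1, hn1mem⟩ := hacc.nonempty
    have hn1 : φ n1 = RPhase.p3 := hn1mem
    -- the switch position
    have hnot : ∃ n, ¬ ∃ f f', φ n = RPhase.p1 f f' := by
      refine ⟨n1, ?_⟩
      rintro ⟨f, f', h⟩
      exact nomatch h.symm.trans hn1
    have hNnot := Nat.find_spec hnot
    have hNpos : Nat.find hnot ≠ 0 := by
      intro h0
      rw [h0] at hNnot
      exact hNnot ⟨_, _, hφ0⟩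
    set N' := Nat.find hnot - 1 with hN'def
    have hNeq : Nat.find hnot = N' + 1 := by omega
    rw [hNeq] at hNnot
    have hprev : ∃ f f', φ N' = RPhase.p1 f f' := by
      by_contra hcon
      exact Nat.find_min hnot (show N' < Nat.find hnot by omega) hcon
    obtain ⟨f, f', hp1⟩ := hprev
    have hs := hst N'
    rw [hp1] at hs
    have hflagN := hflag N' f f' hp1
    cases hc : φ (N' + 1) with
    | p1 g g' =>
      exfalso
      exact hNnot ⟨g, g', hc⟩
    | p2 =>
      rw [hc] at hs
      obtain ⟨hf'true, hB1⟩ := hs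
      have claim2 : ∀ m, N' + 1 ≤ m →
          (φ m = RPhase.p2 ∨ φ m = RPhase.p3) ∧ κ' m ∉ B := by
        intro m hm
        induction m, hm using Nat.le_induction with
        | base => exact ⟨Or.inl hc, hB1⟩
        | succ m hm ih =>
          rcases ih.1 with h | h
          · obtain ⟨hor, hnB, _⟩ := hp2succ m h
            exact ⟨hor, hnB⟩
          · obtain ⟨h3, hnB⟩ := hp3succ m h
            exact ⟨Or.inr h3, hnB⟩
      obtain ⟨n2, hn2mem, hn2gt⟩ := hacc.exists_gt (N' + 1)
      have hn2 : φ n2 = RPhase.p3 := hn2mem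
      have hBvisit : ∃ m > N', κ m ∈ B := by
        by_contra hcon
        push_neg at hcon
        have hall : ∀ m, N' + 1 ≤ m → φ m = RPhase.p2 := by
          intro m hm
          induction m, hm using Nat.le_induction with
          | base => exact hc
          | succ m hm ih =>
            obtain ⟨hor, _, hB⟩ := hp2succ m ih
            rcases hor with h | h
            · exact h
            · exact absurd (hB h) (hcon (m+1) (by omega))
        have := hall n2 (by omega)
        exact nomatch hn2.symm.trans this
      exact ⟨N', hflagN.1 hf'true, fun m hm => (claim2 m hm).2, Or.inr hBvisit⟩
    | p3 =>
      rw [hc] at hs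
      obtain ⟨hf'true, hB1, hdisj⟩ := hs
      have claim3 : ∀ m, N' + 1 ≤ m → φ m = RPhase.p3 ∧ κ' m ∉ B := by
        intro m hm
        induction m, hm using Nat.le_induction with
        | base => exact ⟨hc, hB1⟩
        | succ m hm ih =>
          exact hp3succ m ih.1
      refine ⟨N', hflagN.1 hf'true, fun m hm => (claim3 m hm).2, ?_⟩
      rcases hdisj with h | h
      · exact Or.inl (hflagN.2 h)
      · exact Or.inr ⟨N' + 1, by omega, h⟩

/-- For a deterministic one-pair Rabin automaton `R`, the relation
`{(t,t') | val(run of R on t) > val(run of R on t')}` is ω-regular: it is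
recognizable (reading the merge of `t` and `t'`) by a nondeterministic Büchi
automaton. -/
theorem val_comparison_omega_regular {Q σ : Type*} [Finite Q] [Finite σ]
    (δ : Q → σ → Q) (q0 : Q) (B F : Set Q) :
    ∃ (Q' : Type) (_ : Fintype Q') (init : Set Q') (Δ : Q' → σ × σ → Set Q')
      (acc : Set Q'),
      ∀ w : ℕ → σ × σ,
        runVal B F (runOn δ q0 fun n => (w n).2) <
            runVal B F (runOn δ q0 fun n => (w n).1) ↔
          ∃ ρ : ℕ → Q', ρ 0 ∈ init ∧ (∀ n, ρ (n + 1) ∈ Δ (ρ n) (w n)) ∧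
            {n | ρ n ∈ acc}.Infinite := by
  classical
  haveI : Fintype (Q × Q × RPhase) := Fintype.ofFinite _
  let E : (Q × Q × RPhase) ≃ Fin (Fintype.card (Q × Q × RPhase)) := Fintype.equivFin _
  refine ⟨Fin (Fintype.card (Q × Q × RPhase)), inferInstance,
    {x | E.symm x ∈ init₀ F q0},
    fun x a => {y | E.symm y ∈ Δ₀ δ B F (E.symm x) a},
    {x | E.symm x ∈ acc₀}, ?_⟩
  intro w
  rw [runVal_key, main_correct δ q0 B F w]
  constructor
  · rintro ⟨ρ, h0, hs, hi⟩
    refine ⟨fun n => E (ρ n), ?_, ?_, ?_⟩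
    · show E.symm (E (ρ 0)) ∈ init₀ F q0
      rw [E.symm_apply_apply]; exact h0
    · intro n
      show E.symm (E (ρ (n+1))) ∈ Δ₀ δ B F (E.symm (E (ρ n))) (w n)
      rw [E.symm_apply_apply, E.symm_apply_apply]; exact hs n
    · have he : {n | E.symm (E (ρ n)) ∈ acc₀} = {n | ρ n ∈ acc₀} := by
        ext n; simp only [Set.mem_setOf_eq, Equiv.symm_apply_apply]
      show Set.Infinite {n | E.symm (E (ρ n)) ∈ acc₀}
      exact he ▸ hi
  · rintro ⟨ρ, h0, hs, hi⟩
    exact ⟨fun n => E.symm (ρ n), h0, hs, hi⟩
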